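/- arXiv:1809.00278 — 5 statements merged into one kernel-verified Lean document; each statement's English description precedes it below -/
import Mathlib

section
/- Let G be a group, Γ and U subgroups of G, O a commutative ring, and W an O-module equipped with an O-linear action of U. Suppose t_1, …, t_N ∈ G are such that G is the disjoint union of the double cosets Γ t_i U for 1 ≤ i ≤ N. Then the map f ↦ (f(t_1), …, f(t_N)) is an isomorphism of O-modules S(U,W) ≅ ∏_{i=1}^N W^{t_i^{-1}Γ t_i ∩ U}, where W^{t_i^{-1}Γ t_i ∩ U} denotes the submodule of elements of W fixed by the subgroup t_i^{-1}Γ t_i ∩ U of U. -/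
/-- The space `S(U,W)` of algebraic automorphic forms: functions `f : G → W` with
`f (γ * g * u) = u⁻¹ • f g` for `γ ∈ Γ`, `g ∈ G`, `u ∈ U`, where `U` acts on the
`O`-module `W` through `ρ : U →* (W ≃ₗ[O] W)`. -/
def AutomorphicForms (G : Type*) [Group G] (Γ U : Subgroup G)
    (O : Type*) [CommRing O] (W : Type*) [AddCommGroup W] [Module O W]
    (ρ : U →* (W ≃ₗ[O] W)) : Submodule O (G → W) where
  carrier := {f | ∀ γ ∈ Γ, ∀ (g : G), ∀ (u : G) (hu : u ∈ U),
    f (γ * g * u) = ρ (⟨u, hu⟩ : U)⁻¹ (f g)}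
  add_mem' := by
    intro a b ha hb γ hγ g u hu
    simp only [Pi.add_apply, ha γ hγ g u hu, hb γ hγ g u hu, map_add]
  zero_mem' := by
    intro γ hγ g u hu
    simp
  smul_mem' := by
    intro c a ha γ hγ g u hu
    simp only [Pi.smul_apply, ha γ hγ g u hu, map_smul]

/-- The submodule `W^{t⁻¹Γt ∩ U}` of elements of `W` fixed by the subgroup
`t⁻¹Γt ∩ U` of `U` (acting via `ρ`). -/
def ConjInvariants (G : Type*) [Group G] (Γ U : Subgroup G)
    (O : Type*) [CommRing O] (W : Type*) [AddCommGroup W] [Module O W]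
    (ρ : U →* (W ≃ₗ[O] W)) (t : G) : Submodule O W where
  carrier := {w | ∀ (u : G) (hu : u ∈ U),
    u ∈ Subgroup.map (MulAut.conj t⁻¹).toMonoidHom Γ → ρ (⟨u, hu⟩ : U) w = w}
  add_mem' := by
    intro a b ha hb u hu hu'
    simp only [map_add, ha u hu hu', hb u hu hu']
  zero_mem' := by intro u hu hu'; simp
  smul_mem' := by
    intro c a ha u hu hu'
    simp only [map_smul, ha u hu hu']

section Aux

variable {G : Type*} [Group G] {Γ U : Subgroup G}
  {O : Type*} [CommRing O] {W : Type*} [AddCommGroup W] [Module O W]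
  {ρ : U →* (W ≃ₗ[O] W)}

lemma automorphicForms_aux_wd {t : G} {w : W}
    (hw : w ∈ ConjInvariants G Γ U O W ρ t)
    {γ γ' u u' : G} (hγ : γ ∈ Γ) (hγ' : γ' ∈ Γ) (hu : u ∈ U) (hu' : u' ∈ U)
    (h : γ * t * u = γ' * t * u') :
    ρ (⟨u, hu⟩ : U)⁻¹ w = ρ (⟨u', hu'⟩ : U)⁻¹ w := by
  have hU : u' * u⁻¹ ∈ U := U.mul_mem hu' (U.inv_mem hu)
  have hkey : u' * u⁻¹ = t⁻¹ * (γ'⁻¹ * γ) * t := by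
    calc u' * u⁻¹ = (γ' * t)⁻¹ * (γ' * t * u') * u⁻¹ := by group
      _ = (γ' * t)⁻¹ * (γ * t * u) * u⁻¹ := by rw [h]
      _ = t⁻¹ * (γ'⁻¹ * γ) * t := by group
  have hmem : u' * u⁻¹ ∈ Subgroup.map (MulAut.conj t⁻¹).toMonoidHom Γ := by
    refine ⟨γ'⁻¹ * γ, Γ.mul_mem (Γ.inv_mem hγ') hγ, ?_⟩
    simp only [MulEquiv.coe_toMonoidHom, MulAut.conj_apply, inv_inv]
    rw [hkey]
  have hfix : ρ (⟨u' * u⁻¹, hU⟩ : U) w = w := hw (u' * u⁻¹) hU hmem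
  have hsub : (⟨u' * u⁻¹, hU⟩ : U) = ⟨u', hu'⟩ * (⟨u, hu⟩ : U)⁻¹ := rfl
  rw [hsub, map_mul] at hfix
  rw [map_inv] at hfix
  rw [map_inv, map_inv]
  show (ρ ⟨u, hu⟩).symm w = (ρ ⟨u', hu'⟩).symm w
  rw [eq_comm, LinearEquiv.symm_apply_eq]
  exact hfix.symm

end Aux

/-- Let `G` be a group, `Γ, U ≤ G` subgroups, `O` a commutative ring,
and `W` an `O`-module with an `O`-linear action `ρ` of `U`.  If `G` is the disjoint union
of the double cosets `Γ tᵢ U` for `i = 1, …, N`, then `f ↦ (f t₁, …, f t_N)` is an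
isomorphism of `O`-modules `S(U,W) ≅ ∏ᵢ W^{tᵢ⁻¹Γtᵢ ∩ U}`. -/
theorem automorphicForms_equiv_pi_invariants
    (G : Type*) [Group G] (Γ U : Subgroup G)
    (O : Type*) [CommRing O] (W : Type*) [AddCommGroup W] [Module O W]
    (ρ : U →* (W ≃ₗ[O] W))
    (N : ℕ) (t : Fin N → G)
    (ht : ∀ g : G, ∃! i : Fin N, ∃ γ ∈ Γ, ∃ u ∈ U, g = γ * t i * u) :
    ∃ e : AutomorphicForms G Γ U O W ρ ≃ₗ[O]
        (∀ i : Fin N, ConjInvariants G Γ U O W ρ (t i)),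
      ∀ (f : AutomorphicForms G Γ U O W ρ) (i : Fin N),
        (e f i : W) = (f : G → W) (t i) := by
  classical
  -- membership of values in the invariants
  have hmem : ∀ (f : AutomorphicForms G Γ U O W ρ) (i : Fin N),
      (f : G → W) (t i) ∈ ConjInvariants G Γ U O W ρ (t i) := by
    rintro f i u hu ⟨γ, hγ, hconj⟩
    have hconj' : (t i)⁻¹ * γ * t i = u := by
      simpa [MulAut.conj] using hconj
    have huinv : u⁻¹ ∈ U := U.inv_mem hu
    have hrw : γ⁻¹ * t i * u = t i := by rw [← hconj']; group
    have h2 := f.2 γ⁻¹ (Γ.inv_mem hγ) (t i) u hu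
    rw [hrw, map_inv] at h2
    exact ((LinearEquiv.symm_apply_eq _).mp h2.symm).symm
  choose idx hidx using ht
  have hex : ∀ g, ∃ γ ∈ Γ, ∃ u ∈ U, g = γ * t (idx g) * u := fun g => (hidx g).1
  have huniq : ∀ g (j : Fin N), (∃ γ ∈ Γ, ∃ u ∈ U, g = γ * t j * u) → j = idx g :=
    fun g => (hidx g).2
  choose gam hgam uu huu hdec using hex
  -- the inverse function at the level of raw functions
  set F : (∀ i : Fin N, ConjInvariants G Γ U O W ρ (t i)) → G → W :=
    fun w g => ρ (⟨uu g, huu g⟩ : U)⁻¹ (w (idx g) : W) with hF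
  have hFmem : ∀ w, F w ∈ AutomorphicForms G Γ U O W ρ := by
    intro w γ₀ hγ₀ g v hv
    have hidx2 : idx (γ₀ * g * v) = idx g := by
      refine (huniq (γ₀ * g * v) (idx g) ?_).symm
      exact ⟨γ₀ * gam g, Γ.mul_mem hγ₀ (hgam g), uu g * v, U.mul_mem (huu g) hv,
        by conv_lhs => rw [hdec g]
           group⟩
    have hdec2 : gam (γ₀ * g * v) * t (idx g) * uu (γ₀ * g * v)
        = (γ₀ * gam g) * t (idx g) * (uu g * v) := by
      have h1 := hdec (γ₀ * g * v)
      rw [hidx2] at h1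
      rw [← h1]
      conv_lhs => rw [hdec g]
      group
    have hwd := automorphicForms_aux_wd (w (idx g)).2 (hgam (γ₀ * g * v))
      (Γ.mul_mem hγ₀ (hgam g)) (huu (γ₀ * g * v))
      (U.mul_mem (huu g) hv) hdec2
    show ρ (⟨uu (γ₀ * g * v), huu (γ₀ * g * v)⟩ : U)⁻¹ ((w (idx (γ₀ * g * v))) : W)
        = ρ (⟨v, hv⟩ : U)⁻¹ (ρ (⟨uu g, huu g⟩ : U)⁻¹ (w (idx g) : W))
    rw [hidx2]
    rw [hwd]
    have : (⟨uu g * v, U.mul_mem (huu g) hv⟩ : U) = ⟨uu g, huu g⟩ * ⟨v, hv⟩ := rfl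
    rw [this, mul_inv_rev, map_mul]
    rfl
  refine ⟨{ toFun := fun f j => ⟨(f : G → W) (t j), hmem f j⟩
            map_add' := by intro f g; rfl
            map_smul' := by intro c f; rfl
            invFun := fun w => ⟨F w, hFmem w⟩
            left_inv := ?_
            right_inv := ?_ }, fun f i => rfl⟩
  · intro f
    ext g
    show ρ (⟨uu g, huu g⟩ : U)⁻¹ ((f : G → W) (t (idx g))) = (f : G → W) g
    conv_rhs => rw [hdec g]
    exact (f.2 (gam g) (hgam g) (t (idx g)) (uu g) (huu g)).symm
  · intro w
    funext j
    have hj : j = idx (t j) :=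
      huniq (t j) j ⟨1, Γ.one_mem, 1, U.one_mem, by group⟩
    apply Subtype.ext
    show ρ (⟨uu (t j), huu (t j)⟩ : U)⁻¹ ((w (idx (t j))) : W) = (w j : W)
    have hdecj : gam (t j) * t j * uu (t j) = 1 * t j * 1 := by
      have h1 := hdec (t j)
      rw [← hj] at h1
      rw [← h1]; group
    have hwd := automorphicForms_aux_wd (w j).2 (hgam (t j)) Γ.one_mem
      (huu (t j)) U.one_mem hdecj
    rw [← hj, hwd]
    rw [show (⟨(1:G), U.one_mem⟩ : U) = 1 from rfl]
    simp
end

section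
/- Let G be a group, Γ and U subgroups of G, O a commutative ring, and W a free O-module equipped with an O-linear action of U. Suppose t_1, …, t_N ∈ G are such that G is the disjoint union of the double cosets Γ t_i U, and suppose that for each i the group t_i^{-1}Γ t_i ∩ U is finite of order invertible in O. Then for every O-module A the natural map S(U,W) ⊗_O A → S(U, W ⊗_O A) is an isomorphism, where U acts on W ⊗_O A through its action on W. In particular, the functor A ↦ S(U, W ⊗_O A) on O-modules is exact, and if O = O_E with residue field 𝔽 then S(U,W) ⊗_{O_E} 𝔽 → S(U, W ⊗_{O_E} 𝔽) is an isomorphism. -/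
open scoped TensorProduct

/-- The `O`-linear action of `U` on `W ⊗[O] A` through its action on `W`. -/
noncomputable def tensorRep {G : Type*} [Group G] {U : Subgroup G}
    {O : Type*} [CommRing O] {W : Type*} [AddCommGroup W] [Module O W]
    (ρ : U →* (W ≃ₗ[O] W)) (A : Type*) [AddCommGroup A] [Module O A] :
    U →* ((W ⊗[O] A) ≃ₗ[O] (W ⊗[O] A)) where
  toFun u := TensorProduct.congr (ρ u) (LinearEquiv.refl O A)
  map_one' := by
    refine LinearEquiv.toLinearMap_injective (TensorProduct.ext' ?_)
    intro w a
    simp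
  map_mul' := by
    intro u v
    refine LinearEquiv.toLinearMap_injective (TensorProduct.ext' ?_)
    intro w a
    simp only [map_mul, LinearEquiv.coe_coe, TensorProduct.congr_tmul, LinearEquiv.refl_apply]
    rfl

/-- `f ⊗ a ↦ (g ↦ f g ⊗ a)`, as an element of `S(U, W ⊗ A)`. -/
noncomputable def tensorForm {G : Type*} [Group G] {Γ U : Subgroup G}
    {O : Type*} [CommRing O] {W : Type*} [AddCommGroup W] [Module O W]
    {ρ : U →* (W ≃ₗ[O] W)} {A : Type*} [AddCommGroup A] [Module O A]
    (f : AutomorphicForms G Γ U O W ρ) (a : A) :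
    AutomorphicForms G Γ U O (W ⊗[O] A) (tensorRep ρ A) :=
  ⟨fun g => (f : G → W) g ⊗ₜ[O] a, by
    intro γ hγ g u hu
    change ((f : G → W) (γ * g * u)) ⊗ₜ[O] a =
      ((tensorRep ρ A) (⟨u, hu⟩ : U)⁻¹) (((f : G → W) g) ⊗ₜ[O] a)
    rw [f.2 γ hγ g u hu]
    simp [tensorRep]⟩

/-- The natural map `S(U,W) ⊗[O] A → S(U, W ⊗[O] A)`, sending `f ⊗ a` to `g ↦ f g ⊗ a`. -/
noncomputable def autFormsTensorMap (G : Type*) [Group G] (Γ U : Subgroup G)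
    (O : Type*) [CommRing O] (W : Type*) [AddCommGroup W] [Module O W]
    (ρ : U →* (W ≃ₗ[O] W)) (A : Type*) [AddCommGroup A] [Module O A] :
    (AutomorphicForms G Γ U O W ρ) ⊗[O] A →ₗ[O]
      AutomorphicForms G Γ U O (W ⊗[O] A) (tensorRep ρ A) :=
  TensorProduct.lift
    { toFun := fun f =>
        { toFun := fun a => tensorForm f a
          map_add' := by
            intro a b
            apply Subtype.ext
            funext g
            simp [tensorForm, TensorProduct.tmul_add]
          map_smul' := by
            intro c a
            apply Subtype.ext
            funext g
            simp [tensorForm, TensorProduct.tmul_smul] }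
      map_add' := by
        intro f f'
        apply LinearMap.ext
        intro a
        apply Subtype.ext
        funext g
        simp [tensorForm, TensorProduct.add_tmul]
      map_smul' := by
        intro c f
        apply LinearMap.ext
        intro a
        apply Subtype.ext
        funext g
        simp [tensorForm, TensorProduct.smul_tmul'] }


namespace AFAux

variable {G : Type*} [Group G] {Γ U : Subgroup G}
variable {O : Type*} [CommRing O]
variable {N : ℕ} (t : Fin N → G)

/-- The group `tᵢ⁻¹ Γ tᵢ ∩ U`. -/
def Hgp (Γ : Subgroup G) (i : Fin N) : Subgroup G :=
  Subgroup.map (MulAut.conj (t i)⁻¹).toMonoidHom Γ ⊓ U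

lemma Hgp_le (i : Fin N) : Hgp (U := U) t Γ i ≤ U := inf_le_right

lemma mem_Hgp_of {i : Fin N} {γ u : G} (hγ : γ ∈ Γ) (hu : u ∈ U)
    (h : u = (t i)⁻¹ * γ * t i) : u ∈ Hgp (U := U) t Γ i := by
  refine ⟨⟨γ, hγ, ?_⟩, hu⟩
  simp [MulAut.conj, h, mul_assoc]

lemma Hgp_spec {i : Fin N} {h : G} (hh : h ∈ Hgp (U := U) t Γ i) :
    ∃ γ ∈ Γ, h = (t i)⁻¹ * γ * t i := by
  obtain ⟨⟨γ, hγ, rfl⟩, -⟩ := hh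
  exact ⟨γ, hγ, by simp [MulAut.conj, mul_assoc]⟩

section Module

variable {M : Type*} [AddCommGroup M] [Module O M] (ρM : U →* (M ≃ₗ[O] M))

/-- Fixed points of `Hgp t Γ i` in `M`. -/
def fixSub (Γ : Subgroup G) (i : Fin N) : Submodule O M where
  carrier := {w | ∀ u : U, (u : G) ∈ Hgp (U := U) t Γ i → ρM u w = w}
  add_mem' := by intro a b ha hb u hu; simp [map_add, ha u hu, hb u hu]
  zero_mem' := by intro u hu; simp
  smul_mem' := by intro c a ha u hu; simp [map_smul, ha u hu]

lemma eval_t_mem_fix (f : AutomorphicForms G Γ U O M ρM) (i : Fin N) :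
    (f : G → M) (t i) ∈ fixSub t ρM Γ i := by
  intro u hu
  obtain ⟨γ, hγ, hrep⟩ := Hgp_spec t hu
  have key : ↑γ⁻¹ * t i * ↑u = t i := by rw [hrep]; group
  have h2 := f.2 γ⁻¹ (inv_mem hγ) (t i) ↑u u.2
  rw [key] at h2
  rw [map_inv] at h2
  conv_lhs => rw [h2]
  exact (ρM u).apply_symm_apply _

lemma form_eq_of_eval (ht : ∀ g : G, ∃! i : Fin N, ∃ γ ∈ Γ, ∃ u ∈ U, g = γ * t i * u)
    (f f' : AutomorphicForms G Γ U O M ρM)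
    (h : ∀ i, (f : G → M) (t i) = (f' : G → M) (t i)) : f = f' := by
  apply Subtype.ext
  funext g
  obtain ⟨i, ⟨γ, hγ, u, hu, rfl⟩, -⟩ := ht g
  rw [f.2 γ hγ (t i) u hu, f'.2 γ hγ (t i) u hu, h i]

/-- `g` lies in the double coset `Γ tᵢ U`. -/
def Pdec (Γ : Subgroup G) (i : Fin N) (g : G) : Prop :=
  ∃ u : U, ∃ γ ∈ Γ, g = γ * t i * ↑u

open Classical in
/-- Extension by zero of a fixed vector to a `W`-valued form supported on `Γ tᵢ U`. -/
noncomputable def extFun (Γ : Subgroup G) (i : Fin N) (w : M) (g : G) : M :=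
  if hg : Pdec (U := U) t Γ i g then (ρM hg.choose)⁻¹ w else 0

lemma extFun_spec {i : Fin N} {w : M} (hw : w ∈ fixSub t ρM Γ i) {g : G}
    (u : U) (γ : G) (hγ : γ ∈ Γ) (hg : g = γ * t i * ↑u) :
    extFun t ρM Γ i w g = (ρM u)⁻¹ w := by
  have hP : Pdec (U := U) t Γ i g := ⟨u, γ, hγ, hg⟩
  rw [extFun, dif_pos hP]
  obtain ⟨γ', hγ', hg'⟩ := hP.choose_spec
  set v := hP.choose with hv
  have hH : ((u * v⁻¹ : U) : G) ∈ Hgp (U := U) t Γ i := by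
    refine mem_Hgp_of t (mul_mem (inv_mem hγ) hγ') (u * v⁻¹).2 ?_
    have : (γ : G) * t i * ↑u = γ' * t i * ↑v := by rw [← hg, ← hg']
    have h2 : (u : G) * (↑v)⁻¹ = (t i)⁻¹ * (γ⁻¹ * γ') * t i := by
      have h3 : ((γ * t i)⁻¹ * (γ * t i * ↑u)) * ((γ' * t i * ↑v)⁻¹ * (γ' * t i)) =
          ↑u * (↑v)⁻¹ := by group
      rw [this] at h3
      rw [← h3]; group
    push_cast
    exact h2
  have hfix : ρM (u * v⁻¹) w = w := hw (u * v⁻¹) hH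
  have hfix' : (ρM (u * v⁻¹))⁻¹ w = w := by
    conv_lhs => rw [← hfix]
    exact (ρM (u * v⁻¹)).symm_apply_apply w
  have hcomb : (ρM u)⁻¹ w = (ρM v)⁻¹ ((ρM (u * v⁻¹))⁻¹ w) := by
    have h7 : u = (u * v⁻¹) * v := by group
    calc (ρM u)⁻¹ w = (ρM ((u * v⁻¹) * v))⁻¹ w := by rw [← h7]
      _ = (ρM v)⁻¹ ((ρM (u * v⁻¹))⁻¹ w) := by rw [map_mul, mul_inv_rev]; rfl
  rw [hcomb, hfix']

lemma extFun_mem (i : Fin N) {w : M} (hw : w ∈ fixSub t ρM Γ i) :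
    extFun t ρM Γ i w ∈ AutomorphicForms G Γ U O M ρM := by
  intro γ hγ g u hu
  by_cases hg : Pdec (U := U) t Γ i g
  · obtain ⟨v, γ₀, hγ₀, rfl⟩ := hg
    have e1 : γ * (↑γ₀ * t i * ↑v) * u = ↑(γ * γ₀) * t i * ↑(v * ⟨u, hu⟩) := by
      push_cast; group
    rw [extFun_spec t ρM hw (v * ⟨u, hu⟩) (γ * γ₀) (mul_mem hγ hγ₀) e1,
      extFun_spec t ρM hw v γ₀ hγ₀ rfl]
    simp only [map_inv, map_mul, mul_inv_rev]
    rfl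
  · have hg' : ¬ Pdec (U := U) t Γ i (γ * g * u) := by
      rintro ⟨v, γ₀, hγ₀, he⟩
      refine hg ⟨v * ⟨u, hu⟩⁻¹, γ⁻¹ * γ₀, mul_mem (inv_mem hγ) hγ₀, ?_⟩
      have : g = γ⁻¹ * (↑γ₀ * t i * ↑v) * u⁻¹ := by
        rw [← he]; group
      rw [this]; push_cast; group
    rw [extFun, extFun, dif_neg hg, dif_neg hg']
    simp

lemma extFun_eval_self {i : Fin N} {w : M} (hw : w ∈ fixSub t ρM Γ i) :
    extFun t ρM Γ i w (t i) = w := by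
  have e1 : t i = ↑(1 : G) * t i * ↑((1 : U) : G) := by simp
  rw [extFun_spec t ρM hw 1 1 (one_mem Γ) (by simp)]
  simp

lemma extFun_eval_ne (ht : ∀ g : G, ∃! i : Fin N, ∃ γ ∈ Γ, ∃ u ∈ U, g = γ * t i * u)
    {i j : Fin N} (hne : j ≠ i) (w : M) :
    extFun (U := U) t ρM Γ i w (t j) = 0 := by
  rw [extFun, dif_neg]
  rintro ⟨u, γ, hγ, he⟩
  have h1 : ∃ γ ∈ Γ, ∃ v ∈ U, t j = γ * t i * v := ⟨γ, hγ, u, u.2, he⟩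
  have h2 : ∃ γ ∈ Γ, ∃ v ∈ U, t j = γ * t j * v :=
    ⟨1, one_mem Γ, 1, one_mem U, by simp⟩
  exact hne ((ht (t j)).unique h2 h1)

/-- The linear extension-by-zero map `fixSub → S(U,M)`. -/
noncomputable def extL (Γ : Subgroup G) (i : Fin N) :
    fixSub (O := O) (M := M) t ρM Γ i →ₗ[O] AutomorphicForms G Γ U O M ρM where
  toFun w := ⟨extFun t ρM Γ i (w : M), extFun_mem t ρM i w.2⟩
  map_add' w w' := by
    apply Subtype.ext
    funext g
    show extFun t ρM Γ i (↑w + ↑w') g = extFun t ρM Γ i ↑w g + extFun t ρM Γ i ↑w' g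
    by_cases hg : Pdec (U := U) t Γ i g <;> simp [extFun, hg]
  map_smul' c w := by
    apply Subtype.ext
    funext g
    show extFun t ρM Γ i (c • (w : M)) g = c • extFun t ρM Γ i ↑w g
    by_cases hg : Pdec (U := U) t Γ i g <;> simp [extFun, hg]

/-- The averaging operator over `Hgp t Γ i`. -/
noncomputable def avgL (Γ : Subgroup G) (i : Fin N) [Fintype ↥(Hgp (U := U) t Γ i)] (c : O) :
    M →ₗ[O] M :=
  c • ∑ h : ↥(Hgp (U := U) t Γ i),
    (ρM (Subgroup.inclusion (Hgp_le t i) h)).toLinearMap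

lemma avgL_apply (i : Fin N) [Fintype ↥(Hgp (U := U) t Γ i)] (c : O) (w : M) :
    avgL t ρM Γ i c w
      = c • ∑ h : ↥(Hgp (U := U) t Γ i), ρM (Subgroup.inclusion (Hgp_le t i) h) w := by
  simp [avgL, LinearMap.sum_apply]

lemma avgL_fixed {i : Fin N} [Fintype ↥(Hgp (U := U) t Γ i)] {c : O}
    (hc : c * (Fintype.card ↥(Hgp (U := U) t Γ i) : O) = 1)
    {w : M} (hw : w ∈ fixSub t ρM Γ i) : avgL t ρM Γ i c w = w := by
  rw [avgL_apply]
  have : ∀ h : ↥(Hgp (U := U) t Γ i), ρM (Subgroup.inclusion (Hgp_le t i) h) w = w := by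
    intro h
    exact hw _ h.2
  rw [Finset.sum_congr rfl (fun h _ => this h), Finset.sum_const, Finset.card_univ]
  rw [← Nat.cast_smul_eq_nsmul O, smul_smul, hc, one_smul]

lemma avgL_mem_fix (i : Fin N) [Fintype ↥(Hgp (U := U) t Γ i)] (c : O) (w : M) :
    avgL t ρM Γ i c w ∈ fixSub t ρM Γ i := by
  intro u hu
  rw [avgL_apply, map_smul, map_sum]
  congr 1
  set u₀ : ↥(Hgp (U := U) t Γ i) := ⟨↑u, hu⟩ with hu₀
  have key : ∀ h : ↥(Hgp (U := U) t Γ i),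
      ρM u (ρM (Subgroup.inclusion (Hgp_le t i) h) w)
        = ρM (Subgroup.inclusion (Hgp_le t i) (u₀ * h)) w := by
    intro h
    have : Subgroup.inclusion (Hgp_le (U := U) (Γ := Γ) t i) (u₀ * h)
        = u * Subgroup.inclusion (Hgp_le t i) h := by
      apply Subtype.ext; simp [Subgroup.inclusion, hu₀]
    rw [this, map_mul]
    rfl
  rw [Finset.sum_congr rfl (fun h _ => key h)]
  exact Fintype.sum_equiv (Equiv.mulLeft u₀)
    (fun h => ρM (Subgroup.inclusion (Hgp_le t i) (u₀ * h)) w)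
    (fun h => ρM (Subgroup.inclusion (Hgp_le t i) h) w) (fun h => rfl)

lemma extL_eval_self {i : Fin N} (w : fixSub t ρM Γ i) :
    ((extL t ρM Γ i w : AutomorphicForms G Γ U O M ρM) : G → M) (t i) = w :=
  extFun_eval_self t ρM w.2

lemma extL_eval_ne (ht : ∀ g : G, ∃! i : Fin N, ∃ γ ∈ Γ, ∃ u ∈ U, g = γ * t i * u)
    {i j : Fin N} (hne : j ≠ i) (w : fixSub t ρM Γ i) :
    ((extL t ρM Γ i w : AutomorphicForms G Γ U O M ρM) : G → M) (t j) = 0 :=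
  extFun_eval_ne t ρM ht hne w

end Module

section Tensor

variable {W : Type*} [AddCommGroup W] [Module O W] (ρ : U →* (W ≃ₗ[O] W))
variable (A : Type*) [AddCommGroup A] [Module O A]

lemma rTensor_avgL (i : Fin N) [Fintype ↥(Hgp (U := U) t Γ i)] (c : O) :
    LinearMap.rTensor A (avgL t ρ Γ i c) = avgL t (tensorRep ρ A) Γ i c := by
  apply TensorProduct.ext'
  intro w a
  rw [LinearMap.rTensor_tmul, avgL_apply, avgL_apply, ← TensorProduct.smul_tmul',
    TensorProduct.sum_tmul]
  refine congrArg (c • ·) (Finset.sum_congr rfl fun h _ => ?_)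
  simp [tensorRep]

end Tensor

end AFAux

/-- Let `G` be a group, `Γ, U ≤ G` subgroups, `O` a commutative ring,
and `W` a *free* `O`-module with an `O`-linear action `ρ` of `U`.  Suppose `G` is the
disjoint union of double cosets `Γ tᵢ U` and each group `tᵢ⁻¹Γtᵢ ∩ U` is finite of order
invertible in `O`.  Then for every `O`-module `A` the natural map
`S(U,W) ⊗_O A → S(U, W ⊗_O A)` is an isomorphism. -/
theorem autFormsTensorMap_bijective
    (G : Type*) [Group G] (Γ U : Subgroup G)
    (O : Type*) [CommRing O] (W : Type*) [AddCommGroup W] [Module O W] [Module.Free O W]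
    (ρ : U →* (W ≃ₗ[O] W))
    (N : ℕ) (t : Fin N → G)
    (ht : ∀ g : G, ∃! i : Fin N, ∃ γ ∈ Γ, ∃ u ∈ U, g = γ * t i * u)
    (hfin : ∀ i : Fin N,
      Finite ↥(Subgroup.map (MulAut.conj (t i)⁻¹).toMonoidHom Γ ⊓ U))
    (hinv : ∀ i : Fin N,
      IsUnit ((Nat.card ↥(Subgroup.map (MulAut.conj (t i)⁻¹).toMonoidHom Γ ⊓ U) : ℕ) : O)) :
    ∀ (A : Type*) [AddCommGroup A] [Module O A],
      Function.Bijective (autFormsTensorMap G Γ U O W ρ A) := by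
  intro A _ _
  classical
  haveI instF : ∀ i, Fintype ↥(AFAux.Hgp (U := U) t Γ i) := fun i => @Fintype.ofFinite _ (hfin i)
  have hcard : ∀ i, IsUnit ((Fintype.card ↥(AFAux.Hgp (U := U) t Γ i) : ℕ) : O) := by
    intro i
    have h0 : IsUnit ((Nat.card ↥(AFAux.Hgp (U := U) t Γ i) : ℕ) : O) := hinv i
    rwa [Nat.card_eq_fintype_card] at h0
  choose c hc using fun i => (hcard i).exists_left_inv
  -- the averaging operators
  set avgW : (i : Fin N) → (W →ₗ[O] W) := fun i => AFAux.avgL t ρ Γ i (c i) with havgW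
  -- the "restrict then extend by zero" maps
  set q : (i : Fin N) → (W →ₗ[O] AutomorphicForms G Γ U O W ρ) := fun i =>
    (AFAux.extL t ρ Γ i) ∘ₗ
      (LinearMap.codRestrict (AFAux.fixSub t ρ Γ i) (avgW i)
        (fun w => AFAux.avgL_mem_fix t ρ i (c i) w)) with hq
  have hq_eval_self : ∀ (i : Fin N) (w : W),
      ((q i w : AutomorphicForms G Γ U O W ρ) : G → W) (t i) = avgW i w := by
    intro i w
    exact AFAux.extL_eval_self t ρ _
  have hq_eval_ne : ∀ (i j : Fin N), j ≠ i → ∀ (w : W),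
      ((q i w : AutomorphicForms G Γ U O W ρ) : G → W) (t j) = 0 := by
    intro i j hne w
    exact AFAux.extL_eval_ne t ρ ht hne _
  -- evaluation at `t j` on tensor-valued forms, as a linear map
  set evT : (j : Fin N) →
      (AutomorphicForms G Γ U O (W ⊗[O] A) (tensorRep ρ A) →ₗ[O] (W ⊗[O] A)) := fun j =>
    (LinearMap.proj (t j)).comp
      (Submodule.subtype (AutomorphicForms G Γ U O (W ⊗[O] A) (tensorRep ρ A))) with hevT
  -- the candidate inverse
  set R : AutomorphicForms G Γ U O (W ⊗[O] A) (tensorRep ρ A) →ₗ[O]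
      (AutomorphicForms G Γ U O W ρ) ⊗[O] A :=
    ∑ i, (LinearMap.rTensor A (q i)).comp (evT i) with hR
  have hR_apply : ∀ F, R F = ∑ i, LinearMap.rTensor A (q i)
      ((F : G → W ⊗[O] A) (t i)) := by
    intro F
    rw [hR]
    simp [hevT]
  -- the key summation identity in the `W`-world
  have hq_sum : ∀ f : AutomorphicForms G Γ U O W ρ,
      (∑ i, q i ((f : G → W) (t i))) = f := by
    intro f
    apply AFAux.form_eq_of_eval t ρ ht
    intro k
    have hcoe : ((∑ i, q i ((f : G → W) (t i)) :
        AutomorphicForms G Γ U O W ρ) : G → W) (t k)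
        = ∑ i, ((q i ((f : G → W) (t i)) :
            AutomorphicForms G Γ U O W ρ) : G → W) (t k) := by
      rw [Submodule.coe_sum]
      simp
    rw [hcoe, Finset.sum_eq_single k]
    · rw [hq_eval_self]
      exact AFAux.avgL_fixed t ρ (hc k) (AFAux.eval_t_mem_fix t ρ f k)
    · intro i _ hik
      exact hq_eval_ne i k (Ne.symm hik) _
    · intro hk
      exact absurd (Finset.mem_univ k) hk
  -- aTM on pure tensors
  have haTM_tmul : ∀ (f : AutomorphicForms G Γ U O W ρ) (a : A),
      autFormsTensorMap G Γ U O W ρ A (f ⊗ₜ[O] a) = tensorForm f a := by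
    intro f a
    rfl
  -- left inverse
  have hleft : ∀ x, R (autFormsTensorMap G Γ U O W ρ A x) = x := by
    have hcomp : R ∘ₗ autFormsTensorMap G Γ U O W ρ A = LinearMap.id := by
      apply TensorProduct.ext'
      intro f a
      rw [LinearMap.comp_apply, haTM_tmul, LinearMap.id_apply]
      rw [hR_apply]
      have hFt : ∀ i, ((tensorForm (ρ := ρ) f a :
          AutomorphicForms G Γ U O (W ⊗[O] A) (tensorRep ρ A)) : G → W ⊗[O] A) (t i)
          = ((f : G → W) (t i)) ⊗ₜ[O] a := fun i => rfl
      calc ∑ i, LinearMap.rTensor A (q i)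
            (((tensorForm (ρ := ρ) f a : AutomorphicForms G Γ U O (W ⊗[O] A)
              (tensorRep ρ A)) : G → W ⊗[O] A) (t i))
          = ∑ i, (q i ((f : G → W) (t i))) ⊗ₜ[O] a := by
            refine Finset.sum_congr rfl fun i _ => ?_
            rw [hFt i, LinearMap.rTensor_tmul]
        _ = (∑ i, q i ((f : G → W) (t i))) ⊗ₜ[O] a := by
            rw [TensorProduct.sum_tmul]
        _ = f ⊗ₜ[O] a := by rw [hq_sum]
    intro x
    exact DFunLike.congr_fun hcomp x
  -- the per-index evaluation identity in the tensor world
  have hXi : ∀ i k : Fin N,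
      (evT k) ∘ₗ (autFormsTensorMap G Γ U O W ρ A) ∘ₗ (LinearMap.rTensor A (q i))
        = (if k = i then LinearMap.rTensor A (avgW i) else 0) := by
    intro i k
    apply TensorProduct.ext'
    intro w a
    have hL : ((evT k) ∘ₗ (autFormsTensorMap G Γ U O W ρ A) ∘ₗ
        (LinearMap.rTensor A (q i))) (w ⊗ₜ[O] a)
        = (((q i w : AutomorphicForms G Γ U O W ρ) : G → W) (t k)) ⊗ₜ[O] a := rfl
    rw [hL]
    by_cases hk : k = i
    · subst hk
      rw [hq_eval_self, if_pos rfl, LinearMap.rTensor_tmul]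
    · rw [hq_eval_ne i k hk, if_neg hk]
      simp [TensorProduct.zero_tmul]
  -- right inverse
  have hright : ∀ F, autFormsTensorMap G Γ U O W ρ A (R F) = F := by
    intro F
    apply AFAux.form_eq_of_eval t (tensorRep ρ A) ht
    intro k
    have h1 : ((autFormsTensorMap G Γ U O W ρ A (R F) :
        AutomorphicForms G Γ U O (W ⊗[O] A) (tensorRep ρ A)) : G → W ⊗[O] A) (t k)
        = evT k (autFormsTensorMap G Γ U O W ρ A (R F)) := rfl
    rw [h1, hR_apply, map_sum, map_sum]
    have h2 : ∀ i, evT k (autFormsTensorMap G Γ U O W ρ A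
        (LinearMap.rTensor A (q i) ((F : G → W ⊗[O] A) (t i))))
        = if k = i then LinearMap.rTensor A (avgW i) ((F : G → W ⊗[O] A) (t i))
          else 0 := by
      intro i
      have h3 := DFunLike.congr_fun (hXi i k) ((F : G → W ⊗[O] A) (t i))
      by_cases hk : k = i
      · rw [if_pos hk]
        rw [if_pos hk] at h3
        exact h3
      · rw [if_neg hk]
        rw [if_neg hk] at h3
        simpa using h3
    rw [Finset.sum_congr rfl fun i _ => h2 i]
    rw [Finset.sum_ite_eq]
    rw [if_pos (Finset.mem_univ k)]
    rw [havgW]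
    rw [AFAux.rTensor_avgL]
    exact AFAux.avgL_fixed t (tensorRep ρ A) (hc k)
      (AFAux.eval_t_mem_fix t (tensorRep ρ A) F k)
  exact ⟨Function.LeftInverse.injective hleft, Function.RightInverse.surjective hright⟩
end

section
/- Let G be a group, Γ and U subgroups of G, and let W be a free O_E-module equipped with an O_E-linear action of U. Suppose t_1, …, t_N ∈ G are such that G is the disjoint union of the double cosets Γ t_i U. Then the natural map S(U,W) ⊗_{O_E} E → S(U, W ⊗_{O_E} E) is an isomorphism, where U acts on W ⊗_{O_E} E through its action on W. (No hypothesis on the groups t_i^{-1}Γ t_i ∩ U is needed.) -/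
open scoped TensorProduct

section AuxLemmas

variable {O : Type*} [CommRing O] [IsDomain O]
  {E : Type*} [Field E] [Algebra O E] [IsFractionRing O E]
  {M : Type*} [AddCommGroup M] [Module O M]

lemma algebraMap_ne_zero' {d : O} (hd : d ≠ 0) : algebraMap O E d ≠ 0 := by
  intro h
  exact hd ((IsFractionRing.to_map_eq_zero_iff (K := E)).mp h)

lemma tmul_inv_mul (m : M) {a b : O} (hb : b ≠ 0) :
    m ⊗ₜ[O] (algebraMap O E a)⁻¹ = (b • m) ⊗ₜ[O] (algebraMap O E (a * b))⁻¹ := by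
  rw [TensorProduct.smul_tmul]
  congr 1
  rw [Algebra.smul_def, map_mul, mul_inv, mul_comm ((algebraMap O E a)⁻¹), ← mul_assoc,
    mul_inv_cancel₀ (algebraMap_ne_zero' hb), one_mul]

/-- Every element of `M ⊗[O] E` has the form `m ⊗ (1/d)`. -/
lemma exists_tmul_inv_rep (x : M ⊗[O] E) :
    ∃ (m : M) (d : O), d ≠ 0 ∧ x = m ⊗ₜ[O] (algebraMap O E d)⁻¹ := by
  induction x using TensorProduct.induction_on with
  | zero => exact ⟨0, 1, one_ne_zero, by simp⟩
  | tmul m e =>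
      obtain ⟨a, b, hb, h⟩ := IsFractionRing.div_surjective (A := O) e
      have hb0 : b ≠ 0 := nonZeroDivisors.ne_zero hb
      refine ⟨a • m, b, hb0, ?_⟩
      rw [TensorProduct.smul_tmul]
      congr 1
      rw [Algebra.smul_def, ← h, div_eq_mul_inv]
  | add x y hx hy =>
      obtain ⟨m1, d1, h1, rfl⟩ := hx
      obtain ⟨m2, d2, h2, rfl⟩ := hy
      refine ⟨d2 • m1 + d1 • m2, d1 * d2, mul_ne_zero h1 h2, ?_⟩
      rw [TensorProduct.add_tmul, tmul_inv_mul m1 h2, tmul_inv_mul m2 h1, mul_comm d2 d1]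

/-- Common denominator for a finite family. -/
lemma exists_common_denom {N : ℕ} (v : Fin N → M ⊗[O] E) :
    ∃ (x : Fin N → M) (d : O), d ≠ 0 ∧ ∀ i, v i = x i ⊗ₜ[O] (algebraMap O E d)⁻¹ := by
  choose m dd hdd hv using fun i => exists_tmul_inv_rep (v i)
  refine ⟨fun i => (∏ j ∈ Finset.univ.erase i, dd j) • m i, ∏ j, dd j,
    Finset.prod_ne_zero_iff.mpr (fun j _ => hdd j), fun i => ?_⟩
  have hpe : (∏ j ∈ Finset.univ.erase i, dd j) ≠ 0 :=
    Finset.prod_ne_zero_iff.mpr (fun j _ => hdd j)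
  rw [hv i, tmul_inv_mul (m i) hpe, Finset.mul_prod_erase _ _ (Finset.mem_univ i)]

/-- For `W` free (hence flat) over a domain `O` with fraction field `E`,
`w ⊗ 1 = 0` implies `w = 0`. -/
lemma tmul_one_eq_zero {W : Type*} [AddCommGroup W] [Module O W] [Module.Free O W]
    {w : W} (h : w ⊗ₜ[O] (1 : E) = 0) : w = 0 := by
  have hinj : Function.Injective (Algebra.linearMap O E) := IsFractionRing.injective O E
  have h2 := Module.Flat.lTensor_preserves_injective_linearMap (M := W)
    (Algebra.linearMap O E) hinj
  have h3 : (LinearMap.lTensor W (Algebra.linearMap O E)) (w ⊗ₜ (1 : O)) =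
      (LinearMap.lTensor W (Algebra.linearMap O E)) 0 := by
    simpa using h
  have h4 : w ⊗ₜ[O] (1 : O) = 0 := h2 h3
  have := congrArg (TensorProduct.rid O W) h4
  simpa using this

lemma tmul_inv_eq_zero {W : Type*} [AddCommGroup W] [Module O W] [Module.Free O W]
    {w : W} {d : O} (hd : d ≠ 0) (h : w ⊗ₜ[O] (algebraMap O E d)⁻¹ = 0) : w = 0 := by
  apply tmul_one_eq_zero (O := O) (E := E)
  have := congrArg (fun z : W ⊗[O] E => d • z) h
  simp only [smul_zero] at this
  rw [← TensorProduct.tmul_smul, Algebra.smul_def,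
    mul_inv_cancel₀ (algebraMap_ne_zero' hd)] at this
  exact this

lemma tmul_inv_injective {W : Type*} [AddCommGroup W] [Module O W] [Module.Free O W]
    {a b : W} {d : O} (hd : d ≠ 0)
    (h : a ⊗ₜ[O] (algebraMap O E d)⁻¹ = b ⊗ₜ[O] (algebraMap O E d)⁻¹) : a = b := by
  have : (a - b) ⊗ₜ[O] (algebraMap O E d)⁻¹ = 0 := by
    rw [TensorProduct.sub_tmul, h, sub_self]
  exact sub_eq_zero.mp (tmul_inv_eq_zero hd this)

end AuxLemmas

/-- Let `O` be the ring of integers of a finite extension `E` of `ℚ_p`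
(modelled as a discrete valuation ring with finite residue field of characteristic `p`,
with fraction field `E`).  Let `G` be a group, `Γ, U ≤ G` subgroups, and `W` a free
`O`-module with an `O`-linear action `ρ` of `U`.  Suppose `G` is the disjoint union of
finitely many double cosets `Γ tᵢ U`.  Then the natural map
`S(U,W) ⊗_O E → S(U, W ⊗_O E)` is an isomorphism (no hypothesis on the groups
`tᵢ⁻¹Γtᵢ ∩ U` is needed). -/
theorem autFormsTensorMap_fractionField_bijective
    (p : ℕ) [Fact (Nat.Prime p)]
    (O : Type*) [CommRing O] [IsDomain O] [IsLocalRing O] [IsDiscreteValuationRing O]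
    [Finite (IsLocalRing.ResidueField O)] [CharP (IsLocalRing.ResidueField O) p]
    (E : Type*) [Field E] [Algebra O E] [IsFractionRing O E]
    (G : Type*) [Group G] (Γ U : Subgroup G)
    (W : Type*) [AddCommGroup W] [Module O W] [Module.Free O W]
    (ρ : U →* (W ≃ₗ[O] W))
    (N : ℕ) (t : Fin N → G)
    (ht : ∀ g : G, ∃! i : Fin N, ∃ γ ∈ Γ, ∃ u ∈ U, g = γ * t i * u) :
    Function.Bijective (autFormsTensorMap G Γ U O W ρ E) := by
  constructor
  · -- Injectivity
    rw [injective_iff_map_eq_zero]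
    intro x hx
    obtain ⟨f, d, hd, rfl⟩ := exists_tmul_inv_rep x
    have h0 : ∀ g : G, (f : G → W) g ⊗ₜ[O] (algebraMap O E d)⁻¹ = 0 := by
      intro g
      have := congrArg (fun F : AutomorphicForms G Γ U O (W ⊗[O] E) (tensorRep ρ E) =>
        (F : G → W ⊗[O] E) g) hx
      simpa [autFormsTensorMap, tensorForm] using this
    have hf0 : (f : G → W) = 0 := funext fun g => tmul_inv_eq_zero hd (h0 g)
    have hf : f = 0 := Subtype.ext hf0
    rw [hf, TensorProduct.zero_tmul]
  · -- Surjectivity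
    intro F
    obtain ⟨x, d, hd, hx⟩ := exists_common_denom (fun i => (F : G → W ⊗[O] E) (t i))
    choose idx hP huniq using ht
    choose γf hγf uf huf hgf using hP
    set f : G → W := fun g => (ρ (⟨uf g, huf g⟩ : U))⁻¹ (x (idx g)) with hfdef
    have hval : ∀ g : G, (F : G → W ⊗[O] E) g = f g ⊗ₜ[O] (algebraMap O E d)⁻¹ := by
      intro g
      conv_lhs => rw [hgf g]
      rw [F.2 (γf g) (hγf g) (t (idx g)) (uf g) (huf g), hx (idx g)]
      simp [hfdef, tensorRep]
    have hmem : f ∈ AutomorphicForms G Γ U O W ρ := by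
      intro γ hγ g u hu
      apply tmul_inv_injective (E := E) hd
      rw [← hval (γ * g * u), F.2 γ hγ g u hu, hval g]
      simp [tensorRep]
    refine ⟨(⟨f, hmem⟩ : AutomorphicForms G Γ U O W ρ) ⊗ₜ[O] (algebraMap O E d)⁻¹, ?_⟩
    apply Subtype.ext
    funext g
    have : (autFormsTensorMap G Γ U O W ρ E
        ((⟨f, hmem⟩ : AutomorphicForms G Γ U O W ρ) ⊗ₜ[O] (algebraMap O E d)⁻¹) :
        G → W ⊗[O] E) g = f g ⊗ₜ[O] (algebraMap O E d)⁻¹ := by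
      simp [autFormsTensorMap, tensorForm]
    rw [this, ← hval g]
end

section
/- Let F be a field, G a group, and V an n-dimensional F-vector space with a linear action of G. Let ψ_1, …, ψ_n : G → F^× be pairwise distinct characters. Suppose 0 = V_0 ⊂ V_1 ⊂ ⋯ ⊂ V_n = V and 0 = V'_0 ⊂ V'_1 ⊂ ⋯ ⊂ V'_n = V are two chains of G-stable subspaces with dim_F V_i = dim_F V'_i = i for all i, such that G acts on each quotient V_i/V_{i−1} via the character ψ_i and likewise on each V'_i/V'_{i−1} via ψ_i. Then V_i = V'_i for all 0 ≤ i ≤ n. -/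
/-- Let `F` be a field, `G` a group, and `V` an `n`-dimensional
`F`-vector space with a linear `G`-action `ρ`.  Let `ψ 0, …, ψ (n-1) : G → Fˣ` be pairwise
distinct characters.  Suppose `V'` and `W'` are two full flags of `G`-stable subspaces
(`V' 0 = 0 ⊆ V' 1 ⊆ ⋯ ⊆ V' n = V` with `dim V' i = i`) such that `G` acts on each
one-dimensional quotient `V' (i+1) / V' i` via the character `ψ i` (i.e.
`ρ g x ≡ ψ i g • x mod V' i` for `x ∈ V' (i+1)`), and likewise for `W'`.
Then `V' i = W' i` for all `i`. -/
theorem flag_with_distinct_characters_unique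
    (F : Type*) [Field F] (G : Type*) [Group G]
    (V : Type*) [AddCommGroup V] [Module F V] [FiniteDimensional F V]
    (n : ℕ) (hdim : Module.finrank F V = n)
    (ρ : G →* (V ≃ₗ[F] V))
    (ψ : Fin n → (G →* Fˣ)) (hψ : Function.Injective ψ)
    (V' W' : Fin (n + 1) → Submodule F V)
    (hVmono : Monotone V') (hWmono : Monotone W')
    (hVdim : ∀ i : Fin (n + 1), Module.finrank F (V' i) = (i : ℕ))
    (hWdim : ∀ i : Fin (n + 1), Module.finrank F (W' i) = (i : ℕ))
    (hVstab : ∀ (i : Fin (n + 1)) (g : G), ∀ x ∈ V' i, ρ g x ∈ V' i)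
    (hWstab : ∀ (i : Fin (n + 1)) (g : G), ∀ x ∈ W' i, ρ g x ∈ W' i)
    (hVact : ∀ (i : Fin n) (g : G), ∀ x ∈ V' i.succ,
      ρ g x - ((ψ i g : F) • x) ∈ V' i.castSucc)
    (hWact : ∀ (i : Fin n) (g : G), ∀ x ∈ W' i.succ,
      ρ g x - ((ψ i g : F) • x) ∈ W' i.castSucc) :
    ∀ i : Fin (n + 1), V' i = W' i := by

  classical
  have hVtop : V' (Fin.last n) = ⊤ := by
    apply Submodule.eq_top_of_finrank_eq
    rw [hVdim, hdim]; rfl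
  have key : ∀ k : ℕ, ∀ hk : k ≤ n,
      V' ⟨k, Nat.lt_succ_of_le hk⟩ = W' ⟨k, Nat.lt_succ_of_le hk⟩ := by
    intro k
    induction k with
    | zero =>
      intro hk
      have h1 : V' ⟨0, Nat.lt_succ_of_le hk⟩ = ⊥ :=
        Submodule.finrank_eq_zero.mp (hVdim _)
      have h2 : W' ⟨0, Nat.lt_succ_of_le hk⟩ = ⊥ :=
        Submodule.finrank_eq_zero.mp (hWdim _)
      rw [h1, h2]
    | succ k ih =>
      intro hk1
      have hkn : k < n := hk1
      have hVW := ih (le_of_lt hkn)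
      symm
      apply Submodule.eq_of_le_of_finrank_le
      · intro w hw
        by_contra hnot
        -- minimal index j with w ∈ V' j
        have hwn : w ∈ V' (Fin.last n) := hVtop ▸ Submodule.mem_top
        have hP : ∃ m, ∃ h : m < n + 1, w ∈ V' ⟨m, h⟩ := ⟨n, Nat.lt_succ_self n, hwn⟩
        obtain ⟨j, hj, hwj, hmin⟩ :
            ∃ j, ∃ h : j < n + 1, w ∈ V' ⟨j, h⟩ ∧
              ∀ m, m < j → ¬ ∃ h' : m < n + 1, w ∈ V' ⟨m, h'⟩ :=
          ⟨Nat.find hP, (Nat.find_spec hP).1, (Nat.find_spec hP).2,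
            fun m hm => Nat.find_min hP hm⟩
        have hjgt : k + 1 < j := by
          by_contra hle
          push_neg at hle
          exact hnot (hVmono (show (⟨j, hj⟩ : Fin (n+1)) ≤ ⟨k+1, Nat.lt_succ_of_le hk1⟩ from hle) hwj)
        -- write j = m + 1
        obtain ⟨m, rfl⟩ : ∃ m, j = m + 1 := ⟨j - 1, (Nat.succ_pred_eq_of_pos (by omega)).symm⟩
        have hm : m < n := by omega
        have hwm1 : w ∈ V' ((⟨m, hm⟩ : Fin n).succ) := by
          simpa [Fin.succ_mk] using hwj
        have hwm : w ∉ V' ((⟨m, hm⟩ : Fin n).castSucc) := by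
          intro hmem
          exact hmin m (Nat.lt_succ_self m) ⟨Nat.lt_succ_of_lt hm, by simpa [Fin.castSucc_mk] using hmem⟩
        have hchar : ∀ g : G, (ψ ⟨m, hm⟩ g : F) = (ψ ⟨k, hkn⟩ g : F) := by
          intro g
          by_contra hne
          have h1 := hVact ⟨m, hm⟩ g w hwm1
          have h2 : ρ g w - ((ψ ⟨k, hkn⟩ g : F) • w) ∈ V' ((⟨m, hm⟩ : Fin n).castSucc) := by
            have h2' := hWact ⟨k, hkn⟩ g w (by simpa [Fin.succ_mk] using hw)
            have hle : W' ((⟨k, hkn⟩ : Fin n).castSucc) ≤ V' ((⟨m, hm⟩ : Fin n).castSucc) := by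
              simp only [Fin.castSucc_mk]
              rw [← hVW]
              exact hVmono (Fin.mk_le_mk.mpr (by omega))
            exact hle h2'
          have h3 := Submodule.sub_mem _ h2 h1
          have h4 : ((ψ ⟨m, hm⟩ g : F) - (ψ ⟨k, hkn⟩ g : F)) • w
              ∈ V' ((⟨m, hm⟩ : Fin n).castSucc) := by
            have : (ρ g w - (ψ ⟨k, hkn⟩ g : F) • w) - (ρ g w - (ψ ⟨m, hm⟩ g : F) • w)
                = ((ψ ⟨m, hm⟩ g : F) - (ψ ⟨k, hkn⟩ g : F)) • w := by
              rw [sub_smul]; abel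
            rwa [this] at h3
          have hc : ((ψ ⟨m, hm⟩ g : F) - (ψ ⟨k, hkn⟩ g : F)) ≠ 0 := sub_ne_zero.mpr hne
          exact hwm ((Submodule.smul_mem_iff _ hc).mp h4)
        have hψeq : ψ ⟨m, hm⟩ = ψ ⟨k, hkn⟩ := by
          ext g
          exact_mod_cast hchar g
        have : m = k := by
          have := hψ hψeq
          simpa using this
        omega
      · rw [hVdim, hWdim]
  intro i
  have hle : (i : ℕ) ≤ n := Nat.lt_succ_iff.mp i.isLt
  have := key i hle
  simpa using this
end

section
/- Let A be a discrete valuation ring with maximal ideal 𝔪 and finite residue field k of cardinality q and characteristic ℓ, and let n ≥ 1. Let I ≤ GL_n(A) be the Iwahori subgroup consisting of those matrices whose reduction modulo 𝔪 is upper triangular. If p is a prime with p ≠ ℓ and q ≢ 1 (mod p), then I contains no element of order p. -/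
open IsLocalRing

lemma binom_aux {R : Type*} [Ring R] (M : R) (t : ℕ) :
    ∃ S : R, Commute M S ∧ (1 + M) ^ (t + 2) = 1 + (t + 2) • M + M ^ 2 * S := by
  refine ⟨∑ m ∈ Finset.range (t + 1), M ^ m * ((t + 2).choose (m + 2) : R), ?_, ?_⟩
  · exact Commute.sum_right _ _ _ fun m _ =>
      ((Commute.refl M).pow_right m).mul_right (Nat.cast_commute _ _).symm
  · have h := (Commute.one_right M).add_pow (t + 2)
    rw [add_comm M 1] at h
    rw [h]
    rw [Finset.sum_range_succ' _ (t + 2), Finset.sum_range_succ' _ (t + 1)]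
    have h2 : ∀ m ∈ Finset.range (t + 1),
        M ^ (m + 1 + 1) * 1 ^ (t + 2 - (m + 1 + 1)) * ((t + 2).choose (m + 1 + 1) : R)
          = M ^ 2 * (M ^ m * ((t + 2).choose (m + 2) : R)) := by
      intro m _
      rw [one_pow, mul_one, ← mul_assoc, ← pow_add]
      ring_nf
    rw [Finset.sum_congr rfl h2]
    have h3 : M ^ (0 + 1) * 1 ^ (t + 2 - (0 + 1)) * ((t + 2).choose (0 + 1) : R)
        = (t + 2) • M := by
      simp only [zero_add, pow_one, one_pow, mul_one, Nat.choose_one_right, nsmul_eq_mul]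
      exact ((Nat.cast_commute ((t + 2 : ℕ)) M).symm).eq
    rw [h3]
    simp only [pow_zero, one_pow, mul_one, one_mul, Nat.choose_zero_right, Nat.cast_one]
    rw [Finset.mul_sum]
    abel

lemma tri_diag_mul {R : Type*} [CommRing R] {n : ℕ} {M N : Matrix (Fin n) (Fin n) R}
    (hM : M.BlockTriangular id) (hN : N.BlockTriangular id) (i : Fin n) :
    (M * N) i i = M i i * N i i := by
  rw [Matrix.mul_apply]
  refine Finset.sum_eq_single i (fun k _ hk => ?_) (by simp)
  rcases lt_or_gt_of_ne hk with h | h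
  · rw [hM (show (id k : Fin n) < id i from h), zero_mul]
  · rw [hN (show (id i : Fin n) < id k from h), mul_zero]

lemma tri_pow {R : Type*} [CommRing R] {n : ℕ} {M : Matrix (Fin n) (Fin n) R}
    (hM : M.BlockTriangular id) (t : ℕ) : (M ^ t).BlockTriangular id := by
  induction t with
  | zero => simpa using Matrix.blockTriangular_one
  | succ t ih => rw [pow_succ]; exact ih.mul hM

lemma tri_diag_pow {R : Type*} [CommRing R] {n : ℕ} {M : Matrix (Fin n) (Fin n) R}
    (hM : M.BlockTriangular id) (t : ℕ) (i : Fin n) : (M ^ t) i i = (M i i) ^ t := by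
  induction t with
  | zero => simp [Matrix.one_apply]
  | succ t ih => rw [pow_succ, tri_diag_mul (tri_pow hM t) hM, ih, pow_succ]

lemma strict_tri_pow {R : Type*} [CommRing R] {n : ℕ} {N : Matrix (Fin n) (Fin n) R}
    (hN : N.BlockTriangular id) (hd : ∀ i, N i i = 0) :
    ∀ (t : ℕ) (i j : Fin n), (j : ℕ) < (i : ℕ) + t → (N ^ t) i j = 0 := by
  intro t
  induction t with
  | zero =>
    intro i j hj
    have : j ≠ i := by rintro rfl; omega
    simp [Matrix.one_apply, Ne.symm this]
  | succ t ih =>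
    intro i j hj
    rw [pow_succ, Matrix.mul_apply]
    refine Finset.sum_eq_zero fun c _ => ?_
    by_cases hc : (c : ℕ) < (i : ℕ) + t
    · rw [ih i c hc, zero_mul]
    · have hjc : (j : ℕ) ≤ (c : ℕ) := by omega
      rcases eq_or_lt_of_le hjc with h | h
      · have : c = j := Fin.ext h.symm
        rw [this, hd j, mul_zero]
      · rw [hN (show (id j : Fin n) < id c from h), mul_zero]

lemma unip {k : Type*} [Field k] {n t : ℕ} {N : Matrix (Fin n) (Fin n) k}
    (hpk : (((t + 2 : ℕ)) : k) ≠ 0) {m : ℕ} (hnil : N ^ (m + 1) = 0)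
    (hpow : (1 + N) ^ (t + 2) = 1) : N = 0 := by
  obtain ⟨S, hc, hb⟩ := binom_aux N t
  rw [hpow, add_assoc] at hb
  have hkey : (t + 2) • N = -(N ^ 2 * S) :=
    eq_neg_of_add_eq_zero_left (left_eq_add.mp hb)
  have main : ∀ j, N ^ (j + 1) = 0 → N = 0 := by
    intro j
    induction j with
    | zero => intro h; simpa using h
    | succ j ih =>
      intro h
      apply ih
      have hz : (t + 2) • N ^ (j + 1) = 0 := by
        have e1 : (t + 2) • N ^ (j + 1) = ((t + 2) • N) * N ^ j := by
          rw [smul_mul_assoc, ← pow_succ']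
        rw [e1, hkey, neg_mul, mul_assoc, ← (hc.pow_left j).eq]
        rw [← mul_assoc, ← pow_add]
        have : 2 + j = j + 1 + 1 := by omega
        rw [this, h, zero_mul, neg_zero]
      ext a b
      have := congrFun (congrFun hz a) b
      rw [Matrix.smul_apply, Matrix.zero_apply] at this
      rw [nsmul_eq_mul] at this
      have := mul_eq_zero.mp this
      rcases this with h' | h'
      · exact absurd h' hpk
      · simpa using h'
  exact main m hnil

/-- Let `A` be a discrete valuation ring with maximal ideal `𝔪` and
finite residue field `k` of cardinality `q` and characteristic `ℓ`, and let `n ≥ 1`.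
Let `I ≤ GL_n(A)` be the Iwahori subgroup of matrices whose reduction modulo `𝔪` is
upper triangular.  If `p` is a prime with `p ≠ ℓ` and `q ≢ 1 (mod p)`, then `I` contains
no element of order `p`.  (Upper triangular means the reduction is `BlockTriangular`
with respect to `id`, i.e. the entries below the diagonal vanish.) -/
theorem iwahori_no_element_of_order_p
    (A : Type*) [CommRing A] [IsDomain A] [IsLocalRing A] [IsDiscreteValuationRing A]
    (q ℓ : ℕ) [Finite (ResidueField A)] (hq : Nat.card (ResidueField A) = q)
    [CharP (ResidueField A) ℓ]
    (n : ℕ) (hn : 1 ≤ n)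
    (p : ℕ) (hp : Nat.Prime p) (hpℓ : p ≠ ℓ) (hq1 : ¬ q ≡ 1 [MOD p]) :
    ∀ g : GL (Fin n) A,
      Matrix.BlockTriangular ((g : Matrix (Fin n) (Fin n) A).map (residue A)) id →
      orderOf g ≠ p := by
  intro g htri h
  set k := ResidueField A
  -- p is nonzero in the residue field
  have hpk : ((p : ℕ) : k) ≠ 0 := by
    intro h0
    have hdvd : ℓ ∣ p := (CharP.cast_eq_zero_iff k ℓ p).mp h0
    rcases CharP.char_is_prime_or_zero k ℓ with hℓ | rfl
    · exact hpℓ ((Nat.prime_dvd_prime_iff_eq hℓ hp).mp hdvd).symm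
    · exact hp.ne_zero (zero_dvd_iff.mp hdvd)
  -- p is a unit in A
  have hpA : IsUnit ((p : ℕ) : A) := by
    by_contra hnu
    have hmem : ((p : ℕ) : A) ∈ maximalIdeal A := (mem_maximalIdeal _).mpr hnu
    have : residue A ((p : ℕ) : A) = 0 := Ideal.Quotient.eq_zero_iff_mem.mpr hmem
    rw [map_natCast] at this
    exact hpk this
  have hp2 : 2 ≤ p := hp.two_le
  have hpe : p - 2 + 2 = p := by omega
  -- g ^ p = 1 as a matrix
  have hg1 : g ^ p = 1 := by rw [← h]; exact pow_orderOf_eq_one g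
  have hgp : (g : Matrix (Fin n) (Fin n) A) ^ p = 1 := by
    rw [← Units.val_pow_eq_pow_val, hg1, Units.val_one]
  -- the reduction mod the maximal ideal
  set Gb : Matrix (Fin n) (Fin n) k := (g : Matrix (Fin n) (Fin n) A).map (residue A) with hGb
  have hGbm : Gb = (residue A).mapMatrix (g : Matrix (Fin n) (Fin n) A) := rfl
  have hGbp : Gb ^ p = 1 := by
    rw [hGbm, ← map_pow, hgp, map_one]
  -- the diagonal entries of the reduction are 1
  have hdiag : ∀ i, Gb i i = 1 := by
    intro i
    have hu : (Gb i i) ^ p = 1 := by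
      rw [← tri_diag_pow htri p i, hGbp, Matrix.one_apply_eq]
    have hunit : IsUnit (Gb i i) := IsUnit.of_pow_eq_one hu hp.ne_zero
    have hu' : hunit.unit ^ p = 1 := by
      ext
      rw [Units.val_pow_eq_pow_val, IsUnit.unit_spec, hu, Units.val_one]
    have ho : orderOf hunit.unit ∣ p := orderOf_dvd_of_pow_eq_one hu'
    have hcard : orderOf hunit.unit ∣ q - 1 := by
      have h1 : orderOf hunit.unit ∣ Nat.card kˣ := orderOf_dvd_natCard _
      have h2 : Nat.card kˣ = q - 1 := by
        classical
        letI := Fintype.ofFinite k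
        rw [Nat.card_eq_fintype_card, Fintype.card_units, ← Nat.card_eq_fintype_card, hq]
      rwa [h2] at h1
    have hq2 : 1 < q := by
      rw [← hq]
      exact Finite.one_lt_card
    have h1 : orderOf hunit.unit = 1 := by
      rcases (Nat.Prime.eq_one_or_self_of_dvd hp _ ho) with h' | h'
      · exact h'
      · exfalso
        apply hq1
        exact ((Nat.modEq_iff_dvd' (le_of_lt hq2)).mpr (h' ▸ hcard)).symm
    have : hunit.unit = 1 := orderOf_eq_one_iff.mp h1
    have := congrArg Units.val this
    rwa [IsUnit.unit_spec, Units.val_one] at this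
  -- the reduction is trivial
  have hGb1 : Gb = 1 := by
    set N : Matrix (Fin n) (Fin n) k := Gb - 1 with hN
    have htriN : N.BlockTriangular id := htri.sub Matrix.blockTriangular_one
    have hdN : ∀ i, N i i = 0 := by
      intro i
      rw [hN, Matrix.sub_apply, hdiag i, Matrix.one_apply_eq, sub_self]
    have hNnil : N ^ (n - 1 + 1) = 0 := by
      have hne : n - 1 + 1 = n := by omega
      rw [hne]
      ext i j
      exact strict_tri_pow htriN hdN n i j (by omega)
    have hNpow : (1 + N) ^ (p - 2 + 2) = 1 := by
      rw [hpe, hN, add_sub_cancel, hGbp]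
    have : N = 0 := unip (by rwa [hpe]) hNnil hNpow
    rw [hN] at this
    rw [sub_eq_zero] at this
    exact this
  -- the entries of g - 1 lie in all powers of the maximal ideal
  set M : Matrix (Fin n) (Fin n) A := (g : Matrix (Fin n) (Fin n) A) - 1 with hM
  have hM1 : ∀ a b, M a b ∈ maximalIdeal A := by
    intro a b
    have hmap : M.map (residue A) = 0 := by
      have : M.map (residue A) = (residue A).mapMatrix ((g : Matrix (Fin n) (Fin n) A) - 1) := rfl
      rw [this, map_sub, map_one, ← hGbm, hGb1, sub_self]
    have := congrFun (congrFun hmap a) b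
    rw [Matrix.map_apply, Matrix.zero_apply] at this
    exact Ideal.Quotient.eq_zero_iff_mem.mp this
  have hMpow : (1 + M) ^ (p - 2 + 2) = 1 := by
    rw [hpe, hM, add_sub_cancel, hgp]
  obtain ⟨S, hc, hb⟩ := binom_aux M (p - 2)
  rw [hMpow, add_assoc] at hb
  have hkey : (p - 2 + 2) • M = -(M ^ 2 * S) :=
    eq_neg_of_add_eq_zero_left (left_eq_add.mp hb)
  rw [hpe] at hkey
  have claim : ∀ j, ∀ a b, M a b ∈ (maximalIdeal A) ^ (j + 1) := by
    intro j
    induction j with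
    | zero => intro a b; rw [pow_one]; exact hM1 a b
    | succ j ih =>
      intro a b
      have hsq : ∀ a c, (M ^ 2) a c ∈ (maximalIdeal A) ^ (j + 1 + 1) := by
        intro a c
        rw [pow_two, Matrix.mul_apply]
        refine Ideal.sum_mem _ fun d _ => ?_
        have := Ideal.mul_mem_mul (ih a d) (ih d c)
        rw [← pow_add] at this
        exact Ideal.pow_le_pow_right (by omega) this
      have hterm : (M ^ 2 * S) a b ∈ (maximalIdeal A) ^ (j + 1 + 1) := by
        rw [Matrix.mul_apply]
        exact Ideal.sum_mem _ fun c _ => Ideal.mul_mem_right _ _ (hsq a c)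
      have hz : ((p : ℕ) : A) * M a b ∈ (maximalIdeal A) ^ (j + 1 + 1) := by
        have := congrFun (congrFun hkey a) b
        rw [Matrix.smul_apply, Matrix.neg_apply, nsmul_eq_mul] at this
        rw [this]
        exact neg_mem hterm
      exact (Ideal.unit_mul_mem_iff_mem _ hpA).mp hz
  have hMz : M = 0 := by
    ext a b
    have hbot : (⨅ i : ℕ, (maximalIdeal A) ^ i) = ⊥ :=
      Ideal.iInf_pow_eq_bot_of_isDomain _ (Ideal.IsMaximal.ne_top inferInstance)
    have hmem : M a b ∈ ⨅ i : ℕ, (maximalIdeal A) ^ i := by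
      rw [Submodule.mem_iInf]
      intro i
      cases i with
      | zero => simp
      | succ i => exact claim i a b
    rw [hbot] at hmem
    simpa using hmem
  have hgone : g = 1 := by
    ext1
    rw [Units.val_one]
    have := sub_eq_zero.mp (hM ▸ hMz)
    exact this
  rw [hgone, orderOf_one] at h
  exact hp.one_lt.ne' h.symm
end
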